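/- For every j with 1 ≤ j ≤ N−2, the unitary U_d satisfies (⟨0|⊗⟨0|⊗⟨0|⊗I_N) U_d (|0⟩⊗|0⟩⊗|0⟩⊗e_j) = (1/4)(e_{j−1} − 2 e_j + e_{j+1}). -/

import Mathlib

open Matrix
open scoped Kronecker

noncomputable section

instance instNeZeroPow2 (n : ℕ) : NeZero (2 ^ n) := ⟨pow_ne_zero n two_ne_zero⟩

/-- Cyclic left shift: `Sm • e_j = e_{j-1 mod N}`, i.e. `(Sm)_{i j} = [i = j - 1]`. -/
def Sm (N : ℕ) [NeZero N] : Matrix (Fin N) (Fin N) ℂ :=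
  Matrix.of fun i j => if i = j - 1 then 1 else 0

/-- Cyclic right shift: `Sp • e_j = e_{j+1 mod N}`. -/
def Sp (N : ℕ) [NeZero N] : Matrix (Fin N) (Fin N) ℂ :=
  Matrix.of fun i j => if i = j + 1 then 1 else 0

/-- The index `N - 1` of the last grid point. -/
def fLast (N : ℕ) [NeZero N] : Fin N := ⟨N - 1, Nat.sub_lt (Nat.pos_of_neZero N) Nat.one_pos⟩

def Hgate : Matrix (Fin 2) (Fin 2) ℂ := ((1 / Real.sqrt 2 : ℝ) : ℂ) • !![1, 1; 1, -1]
def Zgate : Matrix (Fin 2) (Fin 2) ℂ := !![1, 0; 0, -1]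
def Xgate : Matrix (Fin 2) (Fin 2) ℂ := !![0, 1; 1, 0]
def P0 : Matrix (Fin 2) (Fin 2) ℂ := !![1, 0; 0, 0]
def P1 : Matrix (Fin 2) (Fin 2) ℂ := !![0, 0; 0, 1]

/-- Controlled flip `F(Q) = X ⊗ Q + I₂ ⊗ (I − Q)` for a projector `Q`. -/
def Fctrl {α : Type*} [DecidableEq α] [Fintype α] (Q : Matrix α α ℂ) :
    Matrix (Fin 2 × α) (Fin 2 × α) ℂ :=
  Xgate ⊗ₖ Q + (1 : Matrix (Fin 2) (Fin 2) ℂ) ⊗ₖ ((1 : Matrix α α ℂ) - Q)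

/-- `C₋ = I₂ ⊗ (|0⟩⟨0| ⊗ I₂ ⊗ S⁻ + |1⟩⟨1| ⊗ I₂ ⊗ I_N)` on `del, ℓ₁, ℓ₀, j`. -/
def Cminus3 (N : ℕ) [NeZero N] :
    Matrix (Fin 2 × Fin 2 × Fin 2 × Fin N) (Fin 2 × Fin 2 × Fin 2 × Fin N) ℂ :=
  (1 : Matrix (Fin 2) (Fin 2) ℂ) ⊗ₖ
    (P0 ⊗ₖ ((1 : Matrix (Fin 2) (Fin 2) ℂ) ⊗ₖ Sm N) +
     P1 ⊗ₖ ((1 : Matrix (Fin 2) (Fin 2) ℂ) ⊗ₖ (1 : Matrix (Fin N) (Fin N) ℂ)))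

/-- `C₊ = I₂ ⊗ I₂ ⊗ (|1⟩⟨1| ⊗ S⁺ + |0⟩⟨0| ⊗ I_N)` on `del, ℓ₁, ℓ₀, j`. -/
def Cplus3 (N : ℕ) [NeZero N] :
    Matrix (Fin 2 × Fin 2 × Fin 2 × Fin N) (Fin 2 × Fin 2 × Fin 2 × Fin N) ℂ :=
  (1 : Matrix (Fin 2) (Fin 2) ℂ) ⊗ₖ ((1 : Matrix (Fin 2) (Fin 2) ℂ) ⊗ₖ
    (P1 ⊗ₖ Sp N + P0 ⊗ₖ (1 : Matrix (Fin N) (Fin N) ℂ)))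

/-- `B₀ = F(|0⟩⟨0| ⊗ |0⟩⟨0| ⊗ e₀e₀ᵀ)`. -/
def B00 (N : ℕ) [NeZero N] :
    Matrix (Fin 2 × Fin 2 × Fin 2 × Fin N) (Fin 2 × Fin 2 × Fin 2 × Fin N) ℂ :=
  Fctrl (P0 ⊗ₖ (P0 ⊗ₖ Matrix.single (0 : Fin N) (0 : Fin N) (1 : ℂ)))

/-- `B₂ = F(|0⟩⟨0| ⊗ |1⟩⟨1| ⊗ e₀e₀ᵀ)`. -/
def B01 (N : ℕ) [NeZero N] :
    Matrix (Fin 2 × Fin 2 × Fin 2 × Fin N) (Fin 2 × Fin 2 × Fin 2 × Fin N) ℂ :=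
  Fctrl (P0 ⊗ₖ (P1 ⊗ₖ Matrix.single (0 : Fin N) (0 : Fin N) (1 : ℂ)))

/-- `B_{N−1} = F(|1⟩⟨1| ⊗ |1⟩⟨1| ⊗ e_{N−1}e_{N−1}ᵀ)`. -/
def B11L (N : ℕ) [NeZero N] :
    Matrix (Fin 2 × Fin 2 × Fin 2 × Fin N) (Fin 2 × Fin 2 × Fin 2 × Fin N) ℂ :=
  Fctrl (P1 ⊗ₖ (P1 ⊗ₖ Matrix.single (fLast N) (fLast N) (1 : ℂ)))

/-- `B₄ = F(|0⟩⟨0| ⊗ |1⟩⟨1| ⊗ e_{N−1}e_{N−1}ᵀ)`. -/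
def B01L (N : ℕ) [NeZero N] :
    Matrix (Fin 2 × Fin 2 × Fin 2 × Fin N) (Fin 2 × Fin 2 × Fin 2 × Fin N) ℂ :=
  Fctrl (P0 ⊗ₖ (P1 ⊗ₖ Matrix.single (fLast N) (fLast N) (1 : ℂ)))

/-- `I₂ ⊗ A ⊗ A ⊗ I_N` for a single-qubit gate `A`. -/
def sandwich (N : ℕ) [NeZero N] (A : Matrix (Fin 2) (Fin 2) ℂ) :
    Matrix (Fin 2 × Fin 2 × Fin 2 × Fin N) (Fin 2 × Fin 2 × Fin 2 × Fin N) ℂ :=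
  (1 : Matrix (Fin 2) (Fin 2) ℂ) ⊗ₖ (A ⊗ₖ (A ⊗ₖ (1 : Matrix (Fin N) (Fin N) ℂ)))

/-- `U_d = (I₂⊗H⊗H⊗I) · C₊ · C₋ · B_{N−1} · B₀ · (I₂⊗Z⊗Z⊗I) · (I₂⊗H⊗H⊗I)`. -/
def Ud (N : ℕ) [NeZero N] :
    Matrix (Fin 2 × Fin 2 × Fin 2 × Fin N) (Fin 2 × Fin 2 × Fin 2 × Fin N) ℂ :=
  sandwich N Hgate * Cplus3 N * Cminus3 N * B11L N * B00 N * sandwich N Zgate * sandwich N Hgate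

/-- `U_n = (I₂⊗H⊗H⊗I) · C₊ · C₋ · B₄ · B₃ · B₂ · B₁ · (I₂⊗Z⊗Z⊗I) · (I₂⊗H⊗H⊗I)`. -/
def Un (N : ℕ) [NeZero N] :
    Matrix (Fin 2 × Fin 2 × Fin 2 × Fin N) (Fin 2 × Fin 2 × Fin 2 × Fin N) ℂ :=
  sandwich N Hgate * Cplus3 N * Cminus3 N * B01L N * B11L N * B01 N * B00 N *
    sandwich N Zgate * sandwich N Hgate

/-- The standard basis vector `e_i` of `ℂ^N`. -/
def eVec (N : ℕ) (i : Fin N) : Fin N → ℂ := Pi.single i 1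


section AuxUd

def sgn : Fin 2 → ℂ := fun a => if a = 0 then 1 else -1

@[simp] lemma sgn0 : sgn 0 = 1 := rfl
@[simp] lemma sgn1 : sgn 1 = -1 := rfl

lemma sandwichH_col (N : ℕ) [NeZero N] (d a b : Fin 2) (k : Fin N) :
    (sandwich N Hgate) *ᵥ Pi.single (d,a,b,k) (1:ℂ) =
    ((1:ℂ)/2) • ((Pi.single (d,0,0,k) 1 : Fin 2 × Fin 2 × Fin 2 × Fin N → ℂ)
      + sgn b • (Pi.single (d,0,1,k) 1 : Fin 2 × Fin 2 × Fin 2 × Fin N → ℂ)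
      + sgn a • (Pi.single (d,1,0,k) 1 : Fin 2 × Fin 2 × Fin 2 × Fin N → ℂ)
      + (sgn a * sgn b) • (Pi.single (d,1,1,k) 1 : Fin 2 × Fin 2 × Fin 2 × Fin N → ℂ)) := by
  have hs : ((Real.sqrt 2 : ℝ) : ℂ)^2 = 2 := by
    rw [← Complex.ofReal_pow, Real.sq_sqrt (by norm_num)]; norm_num
  funext x
  obtain ⟨d', a', b', k'⟩ := x
  rw [Matrix.mulVec_single_one, Matrix.col_apply]
  simp only [sandwich, Hgate, kroneckerMap_apply, Matrix.smul_apply, Matrix.one_apply,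
    Pi.smul_apply, Pi.add_apply, Pi.single_apply, Prod.mk.injEq, smul_eq_mul, sgn]
  fin_cases a <;> fin_cases b <;> fin_cases a' <;> fin_cases b' <;>
    simp [Matrix.one_apply] <;> split_ifs <;> ring_nf <;>
      simp_all [inv_pow, hs] <;> norm_num

lemma sandwichZ_col (N : ℕ) [NeZero N] (d a b : Fin 2) (k : Fin N) :
    (sandwich N Zgate) *ᵥ Pi.single (d,a,b,k) (1:ℂ) =
    (sgn a * sgn b) • (Pi.single (d,a,b,k) 1 : Fin 2 × Fin 2 × Fin 2 × Fin N → ℂ) := by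
  funext x
  obtain ⟨d', a', b', k'⟩ := x
  rw [Matrix.mulVec_single_one, Matrix.col_apply]
  simp only [sandwich, Zgate, kroneckerMap_apply, Matrix.one_apply,
    Pi.smul_apply, Pi.single_apply, Prod.mk.injEq, smul_eq_mul, sgn]
  fin_cases a <;> fin_cases b <;> fin_cases a' <;> fin_cases b' <;>
    simp [Matrix.one_apply] <;> split_ifs <;> simp_all

lemma B00_col (N : ℕ) [NeZero N] (d a b : Fin 2) (k : Fin N) (hk : k ≠ 0) :
    (B00 N) *ᵥ Pi.single (d,a,b,k) (1:ℂ) =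
    (Pi.single (d,a,b,k) 1 : Fin 2 × Fin 2 × Fin 2 × Fin N → ℂ) := by
  funext x
  obtain ⟨d', a', b', k'⟩ := x
  rw [Matrix.mulVec_single_one, Matrix.col_apply]
  simp only [B00, Fctrl, Xgate, P0, P1, Matrix.add_apply, Matrix.sub_apply,
    kroneckerMap_apply, Matrix.one_apply, Matrix.single,
    Pi.single_apply, Prod.mk.injEq, Matrix.of_apply]
  fin_cases a <;> fin_cases b <;> fin_cases a' <;> fin_cases b' <;> fin_cases d <;> fin_cases d' <;>
    simp_all <;> (try (split_ifs <;> simp_all)) <;>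
    (rintro rfl; exact fun h => hk h.symm)

lemma B11L_col (N : ℕ) [NeZero N] (d a b : Fin 2) (k : Fin N) (hk : k ≠ fLast N) :
    (B11L N) *ᵥ Pi.single (d,a,b,k) (1:ℂ) =
    (Pi.single (d,a,b,k) 1 : Fin 2 × Fin 2 × Fin 2 × Fin N → ℂ) := by
  funext x
  obtain ⟨d', a', b', k'⟩ := x
  rw [Matrix.mulVec_single_one, Matrix.col_apply]
  simp only [B11L, Fctrl, Xgate, P0, P1, Matrix.add_apply, Matrix.sub_apply,
    kroneckerMap_apply, Matrix.one_apply, Matrix.single,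
    Pi.single_apply, Prod.mk.injEq, Matrix.of_apply]
  fin_cases a <;> fin_cases b <;> fin_cases a' <;> fin_cases b' <;> fin_cases d <;> fin_cases d' <;>
    simp_all <;> (try (split_ifs <;> simp_all)) <;>
    (rintro rfl; exact fun h => hk h.symm)

lemma Cminus3_col (N : ℕ) [NeZero N] (d a b : Fin 2) (k : Fin N) :
    (Cminus3 N) *ᵥ Pi.single (d,a,b,k) (1:ℂ) =
    (Pi.single (d,a,b, if a = 0 then k - 1 else k) 1 : Fin 2 × Fin 2 × Fin 2 × Fin N → ℂ) := by
  funext x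
  obtain ⟨d', a', b', k'⟩ := x
  rw [Matrix.mulVec_single_one, Matrix.col_apply]
  simp only [Cminus3, P0, P1, Sm, Matrix.add_apply, kroneckerMap_apply, Matrix.one_apply,
    Pi.single_apply, Prod.mk.injEq, Matrix.of_apply]
  fin_cases a <;> fin_cases a' <;> simp_all <;> split_ifs <;> simp_all

lemma Cplus3_col (N : ℕ) [NeZero N] (d a b : Fin 2) (k : Fin N) :
    (Cplus3 N) *ᵥ Pi.single (d,a,b,k) (1:ℂ) =
    (Pi.single (d,a,b, if b = 1 then k + 1 else k) 1 : Fin 2 × Fin 2 × Fin 2 × Fin N → ℂ) := by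
  funext x
  obtain ⟨d', a', b', k'⟩ := x
  rw [Matrix.mulVec_single_one, Matrix.col_apply]
  simp only [Cplus3, P0, P1, Sp, Matrix.add_apply, kroneckerMap_apply, Matrix.one_apply,
    Pi.single_apply, Prod.mk.injEq, Matrix.of_apply]
  fin_cases b <;> fin_cases b' <;> simp_all <;> split_ifs <;> simp_all

end AuxUd

/-- For interior points `1 ≤ j ≤ N−2`,
`(⟨0|⊗⟨0|⊗⟨0|⊗I) U_d (|0⟩⊗|0⟩⊗|0⟩⊗e_j) = (1/4)(e_{j−1} − 2e_j + e_{j+1})`. -/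
theorem ud_interior_action (n : ℕ) (hn : 1 ≤ n) (j : ℕ) (hj1 : 1 ≤ j) (hj2 : j ≤ 2 ^ n - 2) :
    (fun i : Fin (2 ^ n) =>
        Ud (2 ^ n) ((0 : Fin 2), (0 : Fin 2), (0 : Fin 2), i)
          ((0 : Fin 2), (0 : Fin 2), (0 : Fin 2), (⟨j, by omega⟩ : Fin (2 ^ n))))
      = (1 / 4 : ℂ) •
          (eVec (2 ^ n) ⟨j - 1, by omega⟩
            - (2 : ℂ) • eVec (2 ^ n) ⟨j, by omega⟩
            + eVec (2 ^ n) ⟨j + 1, by omega⟩) := by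
  have hN : 2 ≤ 2 ^ n := by
    calc 2 = 2 ^ 1 := rfl
    _ ≤ 2 ^ n := Nat.pow_le_pow_right (by norm_num) hn
  set N := 2 ^ n with hNdef
  set J : Fin N := ⟨j, by omega⟩ with hJ
  set Jm : Fin N := ⟨j - 1, by omega⟩ with hJm
  set Jp : Fin N := ⟨j + 1, by omega⟩ with hJp
  have hJ0 : J ≠ 0 := by
    simp only [hJ, Ne, Fin.ext_iff, Fin.val_zero]; omega
  have hJL : J ≠ fLast N := by
    simp only [hJ, Ne, Fin.ext_iff, fLast]; omega
  have hsub : J - 1 = Jm := by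
    apply Fin.ext
    rw [Fin.sub_def]
    simp only [Fin.val_one', hJ, hJm]
    have h1 : 1 % N = 1 := Nat.mod_eq_of_lt (by omega)
    rw [h1]
    have : N - 1 + j = (j - 1) + N := by omega
    rw [this, Nat.add_mod_right, Nat.mod_eq_of_lt (by omega)]
  have haddm : Jm + 1 = J := by
    apply Fin.ext
    rw [Fin.add_def]
    simp only [Fin.val_one', hJ, hJm]
    have h1 : 1 % N = 1 := Nat.mod_eq_of_lt (by omega)
    rw [h1, Nat.mod_eq_of_lt (by omega)]
    omega
  have hadd : J + 1 = Jp := by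
    apply Fin.ext
    rw [Fin.add_def]
    simp only [Fin.val_one', hJ, hJp]
    have h1 : 1 % N = 1 := Nat.mod_eq_of_lt (by omega)
    rw [h1, Nat.mod_eq_of_lt (by omega)]
  have hB00 : ∀ (d a b : Fin 2) (k : Fin N), k ≠ 0 →
      (B00 N) *ᵥ Pi.single (d,a,b,k) (1:ℂ) = Pi.single (d,a,b,k) 1 :=
    fun d a b k hk => B00_col N d a b k hk
  have hB11 : ∀ (d a b : Fin 2) (k : Fin N), k ≠ fLast N →
      (B11L N) *ᵥ Pi.single (d,a,b,k) (1:ℂ) = Pi.single (d,a,b,k) 1 :=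
    fun d a b k hk => B11L_col N d a b k hk
  funext i
  have key : Ud N ((0:Fin 2), (0:Fin 2), (0:Fin 2), i) ((0:Fin 2), (0:Fin 2), (0:Fin 2), J)
      = ((Ud N) *ᵥ Pi.single ((0:Fin 2), (0:Fin 2), (0:Fin 2), J) (1:ℂ))
        ((0:Fin 2), (0:Fin 2), (0:Fin 2), i) := by
    simp [Matrix.mulVec_single]
  show Ud N ((0:Fin 2), (0:Fin 2), (0:Fin 2), i) ((0:Fin 2), (0:Fin 2), (0:Fin 2), J) = _
  rw [key, Ud]
  simp only [← Matrix.mulVec_mulVec]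
  rw [sandwichH_col]
  simp only [sgn0, sgn1, one_smul, Matrix.mulVec_smul, Matrix.mulVec_add, sandwichZ_col]
  simp only [sgn0, sgn1, one_smul, Matrix.mulVec_smul, Matrix.mulVec_add,
    hB00 _ _ _ _ hJ0, hB11 _ _ _ _ hJL, Cminus3_col]
  simp only [show ((0:Fin 2) = 0) = True from by simp, show ((1:Fin 2) = 0) = False from by simp,
    if_true, if_false, hsub]
  simp only [Matrix.mulVec_smul, Matrix.mulVec_add, Cplus3_col]
  simp only [show ((0:Fin 2) = 1) = False from by simp, show ((1:Fin 2) = 1) = True from by simp,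
    if_true, if_false, haddm, hadd]
  simp only [Matrix.mulVec_smul, Matrix.mulVec_add, sandwichH_col, sgn0, sgn1, one_smul]
  simp only [Pi.smul_apply, Pi.add_apply, Pi.sub_apply, Pi.single_apply, Prod.mk.injEq,
    smul_eq_mul, eVec]
  norm_num
  split_ifs <;> ring
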